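/- Let η be a permutation of [n] with f fixed points, and let Π be uniform on S_n. Then the expected number of fixed points of the commutator [η,Π] = η^{-1}Π^{-1}ηΠ equals n·[((n-f)/n)^2 · 1/(n-1) + (f/n)^2]. -/

import Mathlib

open Finset Equiv

private lemma fiber_card_eq17 {n : ℕ} (i : Fin n) (a b : Fin n) :
    (univ.filter fun π : Perm (Fin n) => π i = a).card =
    (univ.filter fun π : Perm (Fin n) => π i = b).card := by
  apply Finset.card_bij' (fun π _ => Equiv.swap a b * π) (fun π _ => Equiv.swap a b * π)
  · intro π hπ
    simp only [mem_filter, mem_univ, true_and] at hπ ⊢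
    simp [Perm.mul_apply, hπ]
  · intro π hπ
    simp only [mem_filter, mem_univ, true_and] at hπ ⊢
    simp [Perm.mul_apply, hπ]
  · intro π _; simp [← mul_assoc]
  · intro π _; simp [← mul_assoc]

private lemma card_fiber_mul17 {n : ℕ} (i a : Fin n) :
    (univ.filter fun π : Perm (Fin n) => π i = a).card * n = n.factorial := by
  have h : (univ : Finset (Perm (Fin n))).card
      = ∑ b : Fin n, ((univ : Finset (Perm (Fin n))).filter fun π => π i = b).card :=
    Finset.card_eq_sum_card_fiberwise (fun x _ => mem_univ _)
  have h2 : ∀ b ∈ (univ : Finset (Fin n)),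
      ((univ : Finset (Perm (Fin n))).filter fun π => π i = b).card
      = (univ.filter fun π : Perm (Fin n) => π i = a).card :=
    fun b _ => fiber_card_eq17 i b a
  rw [Finset.sum_congr rfl h2, Finset.sum_const, smul_eq_mul] at h
  simp only [card_univ, Fintype.card_fin, Fintype.card_perm] at h
  rw [mul_comm, ← h]

private lemma fiber2_card_eq17 {n : ℕ} (i j a : Fin n) {b b' : Fin n}
    (hb : b ≠ a) (hb' : b' ≠ a) :
    (univ.filter fun π : Perm (Fin n) => π i = a ∧ π j = b).card =
    (univ.filter fun π : Perm (Fin n) => π i = a ∧ π j = b').card := by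
  apply Finset.card_bij' (fun π _ => Equiv.swap b b' * π) (fun π _ => Equiv.swap b b' * π)
  · intro π hπ
    simp only [mem_filter, mem_univ, true_and] at hπ ⊢
    obtain ⟨h1, h2⟩ := hπ
    constructor
    · rw [Perm.mul_apply, h1, Equiv.swap_apply_of_ne_of_ne hb.symm hb'.symm]
    · rw [Perm.mul_apply, h2, Equiv.swap_apply_left]
  · intro π hπ
    simp only [mem_filter, mem_univ, true_and] at hπ ⊢
    obtain ⟨h1, h2⟩ := hπ
    constructor
    · rw [Perm.mul_apply, h1, Equiv.swap_apply_of_ne_of_ne hb.symm hb'.symm]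
    · rw [Perm.mul_apply, h2, Equiv.swap_apply_right]
  · intro π _; simp [← mul_assoc]
  · intro π _; simp [← mul_assoc]

private lemma card_fiber2_mul17 {n : ℕ} {i j a b : Fin n} (hij : i ≠ j) (hab : a ≠ b) :
    (univ.filter fun π : Perm (Fin n) => π i = a ∧ π j = b).card * ((n - 1) * n)
      = n.factorial := by
  have h : ((univ : Finset (Perm (Fin n))).filter fun π => π i = a).card
      = ∑ c ∈ (univ : Finset (Fin n)).erase a,
        ((((univ : Finset (Perm (Fin n))).filter fun π => π i = a)).filter
          fun π => π j = c).card := by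
    apply Finset.card_eq_sum_card_fiberwise
    intro π hπ
    simp only [Finset.mem_coe, mem_filter, mem_univ, true_and] at hπ
    refine Finset.mem_erase.2 ⟨fun hc => hij ?_, mem_univ _⟩
    exact π.injective (by rw [show π j = a from hc, hπ])
  have h2 : ∀ c ∈ (univ : Finset (Fin n)).erase a,
      ((((univ : Finset (Perm (Fin n))).filter fun π => π i = a)).filter
          fun π => π j = c).card
      = (univ.filter fun π : Perm (Fin n) => π i = a ∧ π j = b).card := by
    intro c hc
    rw [Finset.filter_filter]
    exact fiber2_card_eq17 i j a (Finset.ne_of_mem_erase hc) hab.symm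
  rw [Finset.sum_congr rfl h2, Finset.sum_const, smul_eq_mul,
    Finset.card_erase_of_mem (mem_univ a), card_univ, Fintype.card_fin] at h
  rw [← mul_assoc, mul_comm _ (n-1), ← h, mul_comm]
  rw [mul_comm]
  exact card_fiber_mul17 i a

private lemma card_fiber17' {m : ℕ} (i a : Fin (m+2)) :
    (univ.filter fun π : Perm (Fin (m+2)) => π i = a).card = (m+1).factorial := by
  have h := card_fiber_mul17 i a
  rw [Nat.factorial_succ (m+1), mul_comm (m+1+1)] at h
  exact Nat.eq_of_mul_eq_mul_right (Nat.succ_pos _) h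

private lemma card_fiber2_17' {m : ℕ} {i j a b : Fin (m+2)} (hij : i ≠ j) (hab : a ≠ b) :
    (univ.filter fun π : Perm (Fin (m+2)) => π i = a ∧ π j = b).card = m.factorial := by
  have h := card_fiber2_mul17 hij hab
  have e : (m + 2 - 1) = m + 1 := rfl
  rw [e, Nat.factorial_succ (m+1), Nat.factorial_succ m,
    show (m + 1 + 1) * ((m + 1) * m.factorial) = m.factorial * ((m+1)*(m+2)) by ring] at h
  exact Nat.eq_of_mul_eq_mul_right (by positivity) h

private lemma per_i17 {m : ℕ} (η : Perm (Fin (m+2))) (f : ℕ)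
    (hf : (Finset.univ.filter (fun i : Fin (m+2) => η i = i)).card = f) (i : Fin (m+2)) :
    ((univ : Finset (Perm (Fin (m+2)))).filter fun π => π (η i) = η (π i)).card
      = if η i = i then f * (m+1).factorial else ((m+2) - f) * m.factorial := by
  split_ifs with h
  · have e1 : ((univ : Finset (Perm (Fin (m+2)))).filter fun π => π (η i) = η (π i))
        = (univ.filter fun π : Perm (Fin (m+2)) => η (π i) = π i) := by
      apply Finset.filter_congr
      intro π _
      rw [h, eq_comm]
    rw [e1]
    have h2 : ((univ : Finset (Perm (Fin (m+2)))).filter fun π => η (π i) = π i).card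
        = ∑ c ∈ (univ : Finset (Fin (m+2))).filter (fun a => η a = a),
          (((univ : Finset (Perm (Fin (m+2)))).filter fun π => η (π i) = π i).filter
            fun π => π i = c).card := by
      apply Finset.card_eq_sum_card_fiberwise
      intro π hπ
      simp only [Finset.mem_coe, mem_filter, mem_univ, true_and] at hπ ⊢
      exact hπ
    rw [h2]
    have h3 : ∀ c ∈ (univ : Finset (Fin (m+2))).filter (fun a => η a = a),
        (((univ : Finset (Perm (Fin (m+2)))).filter fun π => η (π i) = π i).filter
            fun π => π i = c).card = (m+1).factorial := by
      intro c hc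
      simp only [mem_filter, mem_univ, true_and] at hc
      rw [Finset.filter_filter]
      have e2 : (univ : Finset (Perm (Fin (m+2)))).filter
            (fun π => η (π i) = π i ∧ π i = c)
          = univ.filter (fun π => π i = c) := by
        apply Finset.filter_congr
        intro π _
        constructor
        · exact fun hx => hx.2
        · intro hx; exact ⟨by rw [hx, hc], hx⟩
      rw [e2]
      exact card_fiber17' i c
    rw [Finset.sum_congr rfl h3, Finset.sum_const, smul_eq_mul, hf]
  · have h2 : ((univ : Finset (Perm (Fin (m+2)))).filter fun π => π (η i) = η (π i)).card
        = ∑ c ∈ (univ : Finset (Fin (m+2))).filter (fun a => ¬ η a = a),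
          (((univ : Finset (Perm (Fin (m+2)))).filter fun π => π (η i) = η (π i)).filter
            fun π => π i = c).card := by
      apply Finset.card_eq_sum_card_fiberwise
      intro π hπ
      simp only [Finset.mem_coe, mem_filter, mem_univ, true_and] at hπ ⊢
      intro hc
      exact h (π.injective (by rw [hπ, hc]))
    rw [h2]
    have h3 : ∀ c ∈ (univ : Finset (Fin (m+2))).filter (fun a => ¬ η a = a),
        (((univ : Finset (Perm (Fin (m+2)))).filter fun π => π (η i) = η (π i)).filter
            fun π => π i = c).card = m.factorial := by
      intro c hc
      simp only [mem_filter, mem_univ, true_and] at hc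
      rw [Finset.filter_filter]
      have e2 : (univ : Finset (Perm (Fin (m+2)))).filter
            (fun π => π (η i) = η (π i) ∧ π i = c)
          = univ.filter (fun π => π i = c ∧ π (η i) = η c) := by
        apply Finset.filter_congr
        intro π _
        constructor
        · intro hx; exact ⟨hx.2, by rw [hx.1, hx.2]⟩
        · intro hx; exact ⟨by rw [hx.2, hx.1], hx.1⟩
      rw [e2]
      exact card_fiber2_17' (fun hx => h hx.symm) (fun hx => hc hx.symm)
    rw [Finset.sum_congr rfl h3, Finset.sum_const, smul_eq_mul]
    congr 1
    have := Finset.card_filter_add_card_filter_not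
      (s := (univ : Finset (Fin (m+2)))) (p := fun a => η a = a)
    rw [hf, card_univ, Fintype.card_fin] at this
    omega

private lemma main_case17 (m : ℕ) (η : Equiv.Perm (Fin (m+2))) (f : ℕ)
    (hf : (Finset.univ.filter (fun i : Fin (m+2) => η i = i)).card = f) :
    (∑ π : Equiv.Perm (Fin (m+2)),
        ((Finset.univ.filter (fun i : Fin (m+2) => (η⁻¹ * π⁻¹ * η * π) i = i)).card : ℚ))
      / (Nat.factorial (m+2) : ℚ)
    =
    ((m+2 : ℕ) : ℚ) * (((((m+2:ℕ) : ℚ) - f) / ((m+2:ℕ):ℚ)) ^ 2 * (1 / (((m+2:ℕ) : ℚ) - 1))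
      + ((f : ℚ) / ((m+2:ℕ):ℚ)) ^ 2) := by
  have hcond : ∀ (π : Perm (Fin (m+2))) (i : Fin (m+2)),
      ((η⁻¹ * π⁻¹ * η * π) i = i) ↔ (π (η i) = η (π i)) := by
    intro π i
    simp only [Perm.mul_apply]
    rw [Perm.inv_eq_iff_eq, Perm.inv_eq_iff_eq, eq_comm]
  have key : ∑ π : Perm (Fin (m+2)),
      (Finset.univ.filter (fun i : Fin (m+2) => (η⁻¹ * π⁻¹ * η * π) i = i)).card
      = f * (f * (m+1).factorial) + ((m+2) - f) * (((m+2) - f) * m.factorial) := by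
    have swap1 : ∑ π : Perm (Fin (m+2)),
        (Finset.univ.filter (fun i : Fin (m+2) => (η⁻¹ * π⁻¹ * η * π) i = i)).card
        = ∑ i : Fin (m+2),
          ((univ : Finset (Perm (Fin (m+2)))).filter fun π => π (η i) = η (π i)).card := by
      simp only [Finset.card_filter]
      rw [Finset.sum_comm]
      apply Finset.sum_congr rfl
      intro i _
      apply Finset.sum_congr rfl
      intro π _
      rw [if_congr (hcond π i) rfl rfl]
    rw [swap1]
    rw [Finset.sum_congr rfl (fun i _ => per_i17 η f hf i), Finset.sum_ite, Finset.sum_const,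
      Finset.sum_const, smul_eq_mul, smul_eq_mul, hf]
    congr 2
    have := Finset.card_filter_add_card_filter_not
      (s := (univ : Finset (Fin (m+2)))) (p := fun i => η i = i)
    rw [hf, card_univ, Fintype.card_fin] at this
    omega
  rw [show (∑ π : Equiv.Perm (Fin (m+2)),
        ((Finset.univ.filter (fun i : Fin (m+2) => (η⁻¹ * π⁻¹ * η * π) i = i)).card : ℚ))
      = ((∑ π : Equiv.Perm (Fin (m+2)),
        (Finset.univ.filter (fun i : Fin (m+2) => (η⁻¹ * π⁻¹ * η * π) i = i)).card : ℕ) : ℚ)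
      from by push_cast; rfl]
  rw [key]
  have hfle : f ≤ m + 2 := by
    rw [← hf]
    calc (Finset.univ.filter (fun i : Fin (m+2) => η i = i)).card
        ≤ (univ : Finset (Fin (m+2))).card := Finset.card_filter_le _ _
      _ = m + 2 := by rw [card_univ, Fintype.card_fin]
  have hfac : ((m+2).factorial : ℚ) = ((m+2 : ℕ) : ℚ) * ((m+1:ℕ) : ℚ) * (m.factorial : ℚ) := by
    rw [Nat.factorial_succ (m+1), Nat.factorial_succ m]
    push_cast
    ring
  have hfacm : ((m+1).factorial : ℚ) = ((m+1:ℕ) : ℚ) * (m.factorial : ℚ) := by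
    rw [Nat.factorial_succ m]; push_cast; ring
  have hm0 : (m.factorial : ℚ) ≠ 0 := by positivity
  have h1 : ((m:ℚ) + 2) ≠ 0 := by positivity
  have h2 : ((m:ℚ) + 1) ≠ 0 := by positivity
  push_cast [Nat.cast_sub hfle, hfac, hfacm]
  have h3 : ((m:ℚ) + 2) - 1 ≠ 0 := by
    intro hx; apply h2; linarith
  field_simp
  ring

/-- Let `η` be a permutation of `[n]` with `f` fixed points, and let `Π` be uniform on
`S_n`.  Then the expected number of fixed points of the commutator `[η,Π] = η⁻¹Π⁻¹ηΠ`
equals `n·[((n-f)/n)² · 1/(n-1) + (f/n)²]`. -/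
theorem stmt17 (n : ℕ) (η : Equiv.Perm (Fin n)) (f : ℕ)
    (hf : (Finset.univ.filter (fun i : Fin n => η i = i)).card = f) :
    (∑ π : Equiv.Perm (Fin n),
        ((Finset.univ.filter (fun i : Fin n => (η⁻¹ * π⁻¹ * η * π) i = i)).card : ℚ))
      / (Nat.factorial n : ℚ)
    =
    (n : ℚ) * ((((n : ℚ) - f) / n) ^ 2 * (1 / ((n : ℚ) - 1)) + ((f : ℚ) / n) ^ 2) := by
  obtain _ | _ | m := n
  · simp
  · haveI : Subsingleton (Fin (0+1)) := Fin.subsingleton_one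
    have hf1 : f = 1 := by
      rw [← hf, Finset.filter_true_of_mem (fun i _ => Subsingleton.elim _ _)]
      simp
    subst hf1
    have hone : ∀ π : Equiv.Perm (Fin 1),
        ((Finset.univ.filter (fun i : Fin 1 => (η⁻¹ * π⁻¹ * η * π) i = i)).card : ℚ) = 1 := by
      intro π
      rw [Finset.filter_true_of_mem (fun i _ => Subsingleton.elim _ _)]
      simp
    rw [Finset.sum_congr rfl (fun π _ => hone π), Finset.sum_const, card_univ]
    norm_num [Fintype.card_perm]
  · exact main_case17 m η f hf
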